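/- On a weak almost para-S-manifold, the tensor N^{(3)}_i = £_{ξ_i} f vanishes if and only if ξ_i is a Killing vector field; more precisely, (£_{ξ_i} dη^j)(X,Y) = (£_{ξ_i} g)(X, fY) + g(X, (£_{ξ_i} f)Y) and £_{ξ_i} dη^j = 0. -/

import Mathlib

open scoped BigOperators

noncomputable section

variable (C V : Type*) [CommRing C] [Algebra ℝ C] [AddCommGroup V]
  [Module ℝ V] [Module C V] [IsScalarTower ℝ C V]

/-- A metric weak para-f-structure on a manifold, modelled algebraically:
`C` plays the role of the ring of smooth functions, `V` the `C`-module of vector fields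
with Lie bracket `b` and derivation action `act` of vector fields on functions,
`g` is a compatible pseudo-Riemannian metric (with `f` of rank `2n`, encoded by `hrank`)
and `nabla` its Levi-Civita connection (torsion-free and metric). -/
structure MWPF (p : ℕ) where
  f : V →ₗ[C] V
  Q : V →ₗ[C] V
  ξ : Fin p → V
  η : Fin p → V →ₗ[C] C
  g : V →ₗ[C] V →ₗ[C] C
  b : V → V → V
  act : V → C → C
  nabla : V → V → V
  hQbij : Function.Bijective Q
  hf2 : ∀ X, f (f X) = Q X - ∑ i, η i X • ξ i
  hf3 : ∀ X, f (f (f X)) = f (Q X)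
  hetaxi : ∀ i j, η i (ξ j) = if i = j then (1 : C) else 0
  hQxi : ∀ i, Q (ξ i) = ξ i
  hrange : ∀ X : V, X ∈ LinearMap.range f ↔ ∀ i, η i X = 0
  hgsymm : ∀ X Y, g X Y = g Y X
  hgnondeg : ∀ X, (∀ Y, g X Y = 0) → X = 0
  hrank : ∀ Z, (∀ i, η i Z = 0) → (∀ Y, g Z (f Y) = 0) → Z = 0
  hgcompat : ∀ X Y, g (f X) (f Y) = -(g X (Q Y)) + ∑ i, η i X * η i Y
  hbskew : ∀ X Y, b X Y = - b Y X
  hbaddl : ∀ X Y Z, b (X + Y) Z = b X Z + b Y Z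
  hjacobi : ∀ X Y Z, b X (b Y Z) + b Y (b Z X) + b Z (b X Y) = 0
  hactadd : ∀ X a c, act X (a + c) = act X a + act X c
  hactmul : ∀ X a c, act X (a * c) = act X a * c + a * act X c
  hactX : ∀ (a : C) X Y c, act (a • X + Y) c = a * act X c + act Y c
  hbleib : ∀ X (a : C) Y, b X (a • Y) = act X a • Y + a • b X Y
  hnab1 : ∀ (a : C) X X' Y, nabla (a • X + X') Y = a • nabla X Y + nabla X' Y
  hnabadd : ∀ X Y Z, nabla X (Y + Z) = nabla X Y + nabla X Z
  hnableib : ∀ X (a : C) Y, nabla X (a • Y) = act X a • Y + a • nabla X Y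
  htors : ∀ X Y, nabla X Y - nabla Y X = b X Y
  hmetric : ∀ X Y Z, act X (g Y Z) = g (nabla X Y) Z + g Y (nabla X Z)

namespace MWPF

variable {C V} {p : ℕ} (s : MWPF C V p)

/-- The fundamental 2-form `Φ(X,Y) = g(X, fY)`. -/
def Phi (X Y : V) : C := s.g X (s.f Y)

/-- `dη^i(X,Y) = (1/2)(X(η^i Y) - Y(η^i X) - η^i [X,Y])`. -/
def dEta (i : Fin p) (X Y : V) : C :=
  (2⁻¹ : ℝ) • (s.act X (s.η i Y) - s.act Y (s.η i X) - s.η i (s.b X Y))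

/-- The Nijenhuis torsion `[f,f]`. -/
def Nij (X Y : V) : V :=
  s.f (s.f (s.b X Y)) + s.b (s.f X) (s.f Y) - s.f (s.b (s.f X) Y) - s.f (s.b X (s.f Y))

/-- `N^(1)(X,Y) = [f,f](X,Y) - 2 Σ_i dη^i(X,Y) ξ_i`. -/
def N1 (X Y : V) : V := s.Nij X Y - (2 : ℝ) • ∑ i, s.dEta i X Y • s.ξ i

/-- The difference tensor `Q̃ = Q - id`. -/
def Qt (X : V) : V := s.Q X - X

/-- The Lie derivative of `f`: `(£_Z f)X = [Z, fX] - f[Z,X]`. -/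
def Lief (Z X : V) : V := s.b Z (s.f X) - s.f (s.b Z X)

/-- The Lie derivative of `g`: `(£_Z g)(X,Y) = Z(g(X,Y)) - g([Z,X],Y) - g(X,[Z,Y])`. -/
def Lieg (Z X Y : V) : C := s.act Z (s.g X Y) - s.g (s.b Z X) Y - s.g X (s.b Z Y)

/-- `N^(2)_i(X,Y) = (£_{fX} η^i)Y - (£_{fY} η^i)X`. -/
def N2 (i : Fin p) (X Y : V) : C :=
  (s.act (s.f X) (s.η i Y) - s.η i (s.b (s.f X) Y))
    - (s.act (s.f Y) (s.η i X) - s.η i (s.b (s.f Y) X))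

/-- The exterior differential of the fundamental 2-form. -/
def dPhi (X Y Z : V) : C := (3⁻¹ : ℝ) •
  (s.act X (s.Phi Y Z) + s.act Y (s.Phi Z X) + s.act Z (s.Phi X Y)
    - s.Phi (s.b X Y) Z - s.Phi (s.b Z X) Y - s.Phi (s.b Y Z) X)

/-- The tensor `h_i = (1/2) £_{ξ_i} f`. -/
def hmap (i : Fin p) (X : V) : V := (2⁻¹ : ℝ) • s.Lief (s.ξ i) X

/-- The tensor `N^(5)`. -/
def N5 (X Y Z : V) : C :=
  s.act (s.f Z) (s.g X (s.Qt Y)) - s.act (s.f Y) (s.g X (s.Qt Z))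
    + s.g (s.b X (s.f Z)) (s.Qt Y) - s.g (s.b X (s.f Y)) (s.Qt Z)
    + s.g (s.b Y (s.f Z) - s.b Z (s.f Y) - s.f (s.b Y Z)) (s.Qt X)

/-- The curvature tensor of `nabla`. -/
def Rm (X Y Z : V) : V :=
  s.nabla X (s.nabla Y Z) - s.nabla Y (s.nabla X Z) - s.nabla (s.b X Y) Z

end MWPF

-- ====== auxiliary lemmas ======
namespace MWPF
variable {C V : Type*} [CommRing C] [Algebra ℝ C] [AddCommGroup V]
  [Module ℝ V] [Module C V] [IsScalarTower ℝ C V] {p : ℕ} (s : MWPF C V p)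

lemma half_cancel {x : C} (h : (2⁻¹ : ℝ) • x = 0) : x = 0 := by
  have hx : x = (2 : ℝ) • ((2⁻¹ : ℝ) • x) := by
    rw [smul_smul]; norm_num
  rw [hx, h, smul_zero]

lemma add_self_cancel {x : C} (h : x + x = 0) : x = 0 := by
  have hx : x = (2⁻¹ : ℝ) • (x + x) := by
    rw [← two_smul ℝ x, smul_smul]; norm_num
  rw [hx, h, smul_zero]

lemma act_zero (X : V) : s.act X 0 = 0 := by
  have h := s.hactadd X 0 0
  rw [add_zero] at h
  exact right_eq_add.mp h

lemma act_one (X : V) : s.act X 1 = 0 := by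
  have h := s.hactmul X 1 1
  simp only [mul_one, one_mul] at h
  exact right_eq_add.mp h

lemma act_sub (X : V) (a c : C) : s.act X (a - c) = s.act X a - s.act X c := by
  have h := s.hactadd X (a - c) c
  rw [sub_add_cancel] at h
  exact eq_sub_of_add_eq h.symm

lemma act_neg_one (X : V) : s.act X (-1) = 0 := by
  have h := s.act_sub X 0 1
  simpa [s.act_zero, s.act_one] using h

lemma b_zero (X : V) : s.b X 0 = 0 := by
  have h := s.hbleib X 0 0
  simpa using h

lemma b_neg (X Y : V) : s.b X (-Y) = - s.b X Y := by
  have h := s.hbleib X (-1) Y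
  rw [neg_one_smul] at h
  rw [h, s.act_neg_one, zero_smul, zero_add, neg_one_smul]

lemma b_add (X Y Z : V) : s.b X (Y + Z) = s.b X Y + s.b X Z := by
  rw [s.hbskew X (Y + Z), s.hbaddl, s.hbskew Y X, s.hbskew Z X]
  abel

lemma b_jac (X Y Z : V) : s.b X (s.b Y Z) = s.b (s.b X Y) Z + s.b Y (s.b X Z) := by
  have h := s.hjacobi X Y Z
  rw [s.hbskew Z X, s.b_neg Y, s.hbskew Z (s.b X Y)] at h
  apply eq_of_sub_eq_zero
  rw [← h]; abel

lemma act_comm (i : Fin p) (X Y : V) (c : C) :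
    s.act X (s.act Y c) - s.act Y (s.act X c) - s.act (s.b X Y) c = 0 := by
  have hj := s.hjacobi X Y (c • s.ξ i)
  rw [s.hbskew (c • s.ξ i) X, s.b_neg Y, s.hbskew (c • s.ξ i) (s.b X Y)] at hj
  rw [s.hbleib Y c (s.ξ i), s.b_add X, s.hbleib X (s.act Y c) (s.ξ i),
    s.hbleib X c (s.b Y (s.ξ i)), s.hbleib X c (s.ξ i), s.b_add Y,
    s.hbleib Y (s.act X c) (s.ξ i), s.hbleib Y c (s.b X (s.ξ i)),
    s.hbleib (s.b X Y) c (s.ξ i), s.b_jac X Y (s.ξ i), smul_add] at hj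
  have key : (s.act X (s.act Y c) - s.act Y (s.act X c) - s.act (s.b X Y) c) • s.ξ i = 0 := by
    rw [sub_smul, sub_smul, ← hj]
    abel
  have h2 := congrArg (s.η i) key
  rw [map_smul, map_zero, s.hetaxi] at h2
  simpa using h2

lemma eta_f (k : Fin p) (X : V) : s.η k (s.f X) = 0 := (s.hrange (s.f X)).mp ⟨X, rfl⟩ k

lemma sum_eta_xi (i : Fin p) : ∑ k, s.η k (s.ξ i) • s.ξ k = s.ξ i := by
  rw [Finset.sum_eq_single i]
  · rw [s.hetaxi]; simp
  · intro k _ hk; rw [s.hetaxi]; simp [hk]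
  · intro h; simp at h

lemma ffxi (i : Fin p) : s.f (s.f (s.ξ i)) = 0 := by
  rw [s.hf2, s.hQxi, s.sum_eta_xi, sub_self]

lemma fxi (i : Fin p) : s.f (s.ξ i) = 0 := by
  have h := s.hf3 (s.ξ i)
  rw [s.ffxi, map_zero, s.hQxi] at h
  exact h.symm

lemma g_xi_Q (i : Fin p) (Z : V) : s.g (s.ξ i) (s.Q Z) = s.η i Z := by
  have h := s.hgcompat (s.ξ i) Z
  rw [s.fxi] at h
  simp only [map_zero, LinearMap.zero_apply] at h
  have hsum : ∑ k, s.η k (s.ξ i) * s.η k Z = s.η i Z := by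
    rw [Finset.sum_eq_single i]
    · rw [s.hetaxi]; simp
    · intro k _ hk; rw [s.hetaxi]; simp [hk]
    · intro h'; simp at h'
  rw [hsum] at h
  linear_combination h

lemma Qf (X : V) : s.Q (s.f X) = s.f (s.Q X) := by
  have h := s.hf2 (s.f X)
  have h3 := s.hf3 X
  have hz : ∑ k, s.η k (s.f X) • s.ξ k = 0 := by simp [s.eta_f]
  rw [hz, sub_zero] at h
  rw [← h]; exact h3

lemma g_xi_f (i : Fin p) (W : V) : s.g (s.ξ i) (s.f W) = 0 := by
  obtain ⟨Z, hZ⟩ := s.hQbij.2 W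
  rw [← hZ, ← s.Qf, s.g_xi_Q, s.eta_f]

lemma act_eta_xi (X : V) (m k : Fin p) : s.act X (s.η m (s.ξ k)) = 0 := by
  rw [s.hetaxi]
  by_cases h : m = k
  · simp [h, s.act_one]
  · simp [h, s.act_zero]

lemma eta_Q (k : Fin p) (Z : V) : s.η k (s.Q Z) = s.η k Z := by
  have h := s.hf2 Z
  have h2 : s.Q Z = s.f (s.f Z) + ∑ m, s.η m Z • s.ξ m := by rw [h]; abel
  rw [h2, map_add, s.eta_f]
  simp only [map_sum, map_smul, smul_eq_mul, zero_add]
  rw [Finset.sum_eq_single k]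
  · rw [s.hetaxi]; simp
  · intro m _ hm; rw [s.hetaxi]; simp [Ne.symm hm]
  · intro h'; simp at h'

lemma g_xi (k : Fin p) (W : V) : s.g (s.ξ k) W = s.η k W := by
  obtain ⟨Z, hZ⟩ := s.hQbij.2 W
  rw [← hZ, s.g_xi_Q, s.eta_Q]

lemma dEta_double (j : Fin p) (U W : V) :
    s.dEta j U W + s.dEta j U W
      = s.act U (s.η j W) - s.act W (s.η j U) - s.η j (s.b U W) := by
  simp only [MWPF.dEta]
  rw [← two_smul ℝ, smul_smul]
  norm_num

lemma eta_b_xi (hS : ∀ (i : Fin p) (X Y : V), s.dEta i X Y = s.Phi X Y)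
    (i j : Fin p) (Z : V) :
    s.act (s.ξ i) (s.η j Z) = s.η j (s.b (s.ξ i) Z) := by
  have h := hS j (s.ξ i) Z
  simp only [MWPF.dEta, MWPF.Phi] at h
  rw [s.g_xi_f, s.act_eta_xi, sub_zero] at h
  exact sub_eq_zero.mp (half_cancel h)

end MWPF

/-- on a weak almost para-S-manifold,
`(£_{ξ_i} dη^j)(X,Y) = (£_{ξ_i} g)(X, fY) + g(X, (£_{ξ_i} f)Y)`, `£_{ξ_i} dη^j = 0`,
and `N^(3)_i = £_{ξ_i} f = 0` if and only if `ξ_i` is a Killing vector field. -/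
theorem paraS_N3_iff_Killing {C V : Type*} [CommRing C] [Algebra ℝ C] [AddCommGroup V]
    [Module ℝ V] [Module C V] [IsScalarTower ℝ C V] {p : ℕ} (s : MWPF C V p)
    (hS : ∀ (i : Fin p) (X Y : V), s.dEta i X Y = s.Phi X Y) :
    (∀ (i j : Fin p) (X Y : V),
      s.act (s.ξ i) (s.dEta j X Y) - s.dEta j (s.b (s.ξ i) X) Y
        - s.dEta j X (s.b (s.ξ i) Y)
      = s.Lieg (s.ξ i) X (s.f Y) + s.g X (s.Lief (s.ξ i) Y)) ∧
    (∀ (i j : Fin p) (X Y : V),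
      s.act (s.ξ i) (s.dEta j X Y) - s.dEta j (s.b (s.ξ i) X) Y
        - s.dEta j X (s.b (s.ξ i) Y) = 0) ∧
    (∀ i : Fin p, (∀ X, s.Lief (s.ξ i) X = 0) ↔ (∀ X Y, s.Lieg (s.ξ i) X Y = 0)) := by
  have hbx := s.eta_b_xi hS
  have part1 : ∀ (i j : Fin p) (X Y : V),
      s.act (s.ξ i) (s.dEta j X Y) - s.dEta j (s.b (s.ξ i) X) Y
        - s.dEta j X (s.b (s.ξ i) Y)
      = s.Lieg (s.ξ i) X (s.f Y) + s.g X (s.Lief (s.ξ i) Y) := by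
    intro i j X Y
    rw [hS j X Y, hS j (s.b (s.ξ i) X) Y, hS j X (s.b (s.ξ i) Y)]
    simp only [MWPF.Phi, MWPF.Lieg, MWPF.Lief, map_sub]
    ring
  have part2 : ∀ (i j : Fin p) (X Y : V),
      s.act (s.ξ i) (s.dEta j X Y) - s.dEta j (s.b (s.ξ i) X) Y
        - s.dEta j X (s.b (s.ξ i) Y) = 0 := by
    intro i j X Y
    rw [hS j X Y, hS j (s.b (s.ξ i) X) Y, hS j X (s.b (s.ξ i) Y)]
    apply MWPF.add_self_cancel
    have hd1 : s.Phi X Y + s.Phi X Y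
        = s.act X (s.η j Y) - s.act Y (s.η j X) - s.η j (s.b X Y) := by
      rw [← hS j X Y]; exact s.dEta_double j X Y
    have hd2 : s.Phi (s.b (s.ξ i) X) Y + s.Phi (s.b (s.ξ i) X) Y
        = s.act (s.b (s.ξ i) X) (s.η j Y) - s.act Y (s.η j (s.b (s.ξ i) X))
          - s.η j (s.b (s.b (s.ξ i) X) Y) := by
      rw [← hS j (s.b (s.ξ i) X) Y]; exact s.dEta_double j _ Y
    have hd3 : s.Phi X (s.b (s.ξ i) Y) + s.Phi X (s.b (s.ξ i) Y)
        = s.act X (s.η j (s.b (s.ξ i) Y)) - s.act (s.b (s.ξ i) Y) (s.η j X)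
          - s.η j (s.b X (s.b (s.ξ i) Y)) := by
      rw [← hS j X (s.b (s.ξ i) Y)]; exact s.dEta_double j X _
    have ha : s.act (s.ξ i) (s.Phi X Y) + s.act (s.ξ i) (s.Phi X Y)
        = s.act (s.ξ i) (s.act X (s.η j Y)) - s.act (s.ξ i) (s.act Y (s.η j X))
          - s.act (s.ξ i) (s.η j (s.b X Y)) := by
      rw [← s.hactadd, hd1, s.act_sub, s.act_sub]
    have hc0 : s.act (s.ξ i) (s.η j (s.b X Y)) = s.η j (s.b (s.ξ i) (s.b X Y)) :=
      hbx i j _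
    have hjac : s.η j (s.b (s.ξ i) (s.b X Y))
        = s.η j (s.b (s.b (s.ξ i) X) Y) + s.η j (s.b X (s.b (s.ξ i) Y)) := by
      rw [s.b_jac, map_add]
    have hc1 : s.act Y (s.η j (s.b (s.ξ i) X)) = s.act Y (s.act (s.ξ i) (s.η j X)) := by
      rw [hbx i j X]
    have hc2 : s.act X (s.η j (s.b (s.ξ i) Y)) = s.act X (s.act (s.ξ i) (s.η j Y)) := by
      rw [hbx i j Y]
    have hm1 := s.act_comm i (s.ξ i) X (s.η j Y)
    have hm2 := s.act_comm i (s.ξ i) Y (s.η j X)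
    linear_combination ha - hc0 - hjac - hd2 + hc1 - hd3 - hc2 + hm1 - hm2
  refine ⟨part1, part2, ?_⟩
  intro i
  have key : ∀ X U : V, s.Lieg (s.ξ i) X (s.f U) + s.g X (s.Lief (s.ξ i) U) = 0 := by
    intro X U
    rw [← part1 i i X U]; exact part2 i i X U
  constructor
  · intro hL X Y
    have hPhi0 : ∀ X' U : V, s.Lieg (s.ξ i) X' (s.f U) = 0 := by
      intro X' U
      have h := key X' U
      rw [hL U, map_zero, add_zero] at h; exact h
    have hbxi : ∀ k, s.b (s.ξ i) (s.ξ k) = 0 := by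
      intro k
      have hfW : s.f (s.b (s.ξ i) (s.ξ k)) = 0 := by
        have h := hL (s.ξ k)
        simp only [MWPF.Lief] at h
        rw [s.fxi, s.b_zero, zero_sub, neg_eq_zero] at h
        exact h
      have hη : ∀ m, s.η m (s.b (s.ξ i) (s.ξ k)) = 0 := by
        intro m
        rw [← hbx i m (s.ξ k), s.act_eta_xi]
      obtain ⟨U, hU⟩ := (s.hrange _).mpr hη
      have hffU : s.f (s.f U) = 0 := by rw [hU]; exact hfW
      have hQU : s.Q U = ∑ k', s.η k' U • s.ξ k' := by
        have h2 := s.hf2 U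
        rw [hffU] at h2
        exact sub_eq_zero.mp h2.symm
      have hQW : s.Q (s.b (s.ξ i) (s.ξ k)) = 0 := by
        rw [← hU, s.Qf, hQU, map_sum]
        apply Finset.sum_eq_zero
        intro m _
        rw [map_smul, s.fxi, smul_zero]
      apply s.hQbij.1
      rw [hQW, map_zero]
    have hLxi : ∀ k, s.Lieg (s.ξ i) X (s.ξ k) = 0 := by
      intro k
      simp only [MWPF.Lieg]
      rw [hbxi k, s.hgsymm X (s.ξ k), s.g_xi, s.hgsymm (s.b (s.ξ i) X) (s.ξ k),
        s.g_xi, hbx i k X]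
      simp
    let L : V →ₗ[C] C :=
      { toFun := fun W => s.Lieg (s.ξ i) X W
        map_add' := by
          intro U W
          simp only [MWPF.Lieg, s.b_add, map_add, s.hactadd]
          ring
        map_smul' := by
          intro a W
          simp only [MWPF.Lieg, RingHom.id_apply, smul_eq_mul, s.hbleib, map_add,
            map_smul, s.hactmul]
          ring }
    obtain ⟨U, hU⟩ := s.hQbij.2 Y
    have hdec : Y = s.f (s.f U) + ∑ m, s.η m U • s.ξ m := by
      rw [← hU, s.hf2]; abel
    have : L Y = 0 := by
      rw [hdec, map_add, map_sum]
      rw [show L (s.f (s.f U)) = 0 from hPhi0 X (s.f U), zero_add]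
      apply Finset.sum_eq_zero
      intro m _
      rw [map_smul, show L (s.ξ m) = 0 from hLxi m, smul_zero]
    exact this
  · intro hK U
    apply s.hgnondeg
    intro Y
    rw [s.hgsymm]
    have h := key Y U
    rw [hK Y (s.f U), zero_add] at h
    exact h
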